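/- Let φ¹,…,φ^{n−1} be positive reals and (x₁,y₁),…,(x_{n−1},y_{n−1}) points in ℝ≥0² with xᵢyⱼ − xⱼyᵢ > 0 for all 1 ≤ i < j ≤ n−1. Then at least one of the two inequalities holds: Σ_{1≤i<j≤n−1} φⁱφʲ(xᵢ − xⱼ) > 0, or Σ_{1≤i<j≤n−1} φⁱφʲ(yⱼ − yᵢ) > 0. -/
import Mathlib

open Finset

private lemma sum_Ioi_swap {m : ℕ} (g : Fin m → Fin m → ℝ) :
    ∑ i, ∑ j ∈ Finset.Ioi i, g i j = ∑ j, ∑ i ∈ Finset.Iio j, g i j := by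
  rw [Finset.sum_sigma', Finset.sum_sigma']
  apply Finset.sum_nbij' (fun p => ⟨p.2, p.1⟩) (fun p => ⟨p.2, p.1⟩) <;>
    simp [Finset.mem_sigma]

private lemma collapse {m : ℕ} (a f : Fin m → ℝ) :
    ∑ i, ∑ j ∈ Finset.Ioi i, a i * a j * (f i - f j)
      = ∑ i, a i * ((∑ j ∈ Finset.Ioi i, a j) - ∑ j ∈ Finset.Iio i, a j) * f i := by
  have h1 : ∑ i, ∑ j ∈ Finset.Ioi i, a i * a j * (f i - f j)
      = (∑ i, ∑ j ∈ Finset.Ioi i, a i * a j * f i)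
        - ∑ i, ∑ j ∈ Finset.Ioi i, a i * a j * f j := by
    rw [← Finset.sum_sub_distrib]
    congr 1; ext i
    rw [← Finset.sum_sub_distrib]
    congr 1; ext j; ring
  rw [h1, sum_Ioi_swap (fun i j => a i * a j * f j)]
  rw [← Finset.sum_sub_distrib]
  congr 1; ext i
  have e1 : ∑ j ∈ Finset.Ioi i, a i * a j * f i = a i * f i * ∑ j ∈ Finset.Ioi i, a j := by
    rw [Finset.mul_sum]; exact Finset.sum_congr rfl fun j _ => by ring
  have e2 : ∑ j ∈ Finset.Iio i, a j * a i * f i = a i * f i * ∑ j ∈ Finset.Iio i, a j := by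
    rw [Finset.mul_sum]; exact Finset.sum_congr rfl fun j _ => by ring
  rw [e1, e2]; ring

/-- For positive reals `φ¹,…,φ^{n−1}` and points
`(xᵢ,yᵢ) ∈ ℝ≥0²` with strictly increasing polar angle
(`xᵢyⱼ − xⱼyᵢ > 0` for `i < j`), at least one of
`Σ_{i<j} φⁱφʲ(xᵢ−xⱼ) > 0` or `Σ_{i<j} φⁱφʲ(yⱼ−yᵢ) > 0` holds. -/
theorem inward_direction_exists (n : ℕ) (hn : 3 ≤ n)
    (φ : Fin (n - 1) → ℝ) (hφ : ∀ i, 0 < φ i)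
    (x y : Fin (n - 1) → ℝ) (hx : ∀ i, 0 ≤ x i) (hy : ∀ i, 0 ≤ y i)
    (hangle : ∀ i j : Fin (n - 1), i < j → 0 < x i * y j - x j * y i) :
    (0 < ∑ i, ∑ j ∈ Finset.Ioi i, φ i * φ j * (x i - x j)) ∨
    (0 < ∑ i, ∑ j ∈ Finset.Ioi i, φ i * φ j * (y j - y i)) := by
  by_contra hcon
  push_neg at hcon
  obtain ⟨hX, hY⟩ := hcon
  have hm2 : 2 ≤ n - 1 := by omega
  -- the coefficient function
  set c : Fin (n - 1) → ℝ :=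
    fun i => (∑ j ∈ Finset.Ioi i, φ j) - ∑ j ∈ Finset.Iio i, φ j with hc
  -- antitonicity of c
  have hanti : ∀ i j : Fin (n - 1), i ≤ j → c j ≤ c i := by
    intro i j hij
    apply sub_le_sub
    · exact Finset.sum_le_sum_of_subset_of_nonneg
        (Finset.Ioi_subset_Ioi hij) (fun k _ _ => (hφ k).le)
    · exact Finset.sum_le_sum_of_subset_of_nonneg
        (Finset.Iio_subset_Iio hij) (fun k _ _ => (hφ k).le)
  -- rewrite the two sums
  have hXc : ∑ i, φ i * c i * x i ≤ 0 := by
    rw [← collapse φ x]; exact hX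
  have hYc : 0 ≤ ∑ i, φ i * c i * y i := by
    have heq : ∑ i, ∑ j ∈ Finset.Ioi i, φ i * φ j * (y j - y i)
        = -∑ i, φ i * c i * y i := by
      rw [← collapse φ y, ← Finset.sum_neg_distrib]
      congr 1; ext i
      rw [← Finset.sum_neg_distrib]
      congr 1; ext j; ring
    rw [heq] at hY; linarith
  -- the two extreme indices
  have h0 : (0 : ℕ) < n - 1 := by omega
  have hlast : n - 1 - 1 < n - 1 := by omega
  set i0 : Fin (n - 1) := ⟨0, h0⟩ with hi0
  set j0 : Fin (n - 1) := ⟨n - 1 - 1, hlast⟩ with hj0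
  have hi0j0 : i0 < j0 := by
    simp only [Fin.lt_def, hi0, hj0]; omega
  have hci0 : 0 < c i0 := by
    have h1 : ∑ j ∈ Finset.Iio i0, φ j = 0 := by
      apply Finset.sum_eq_zero
      intro j hj
      exact absurd (Finset.mem_Iio.mp hj) (by simp [hi0, Fin.lt_def])
    have h2 : 0 < ∑ j ∈ Finset.Ioi i0, φ j :=
      Finset.sum_pos (fun k _ => hφ k) ⟨j0, Finset.mem_Ioi.mpr hi0j0⟩
    show 0 < (∑ j ∈ Finset.Ioi i0, φ j) - ∑ j ∈ Finset.Iio i0, φ j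
    rw [h1]; linarith
  have hcj0 : c j0 < 0 := by
    have h1 : ∑ j ∈ Finset.Ioi j0, φ j = 0 := by
      apply Finset.sum_eq_zero
      intro j hj
      have := Finset.mem_Ioi.mp hj
      exact absurd this (by simp [hj0, Fin.lt_def]; omega)
    have h2 : 0 < ∑ j ∈ Finset.Iio j0, φ j :=
      Finset.sum_pos (fun k _ => hφ k) ⟨i0, Finset.mem_Iio.mpr hi0j0⟩
    show (∑ j ∈ Finset.Ioi j0, φ j) - ∑ j ∈ Finset.Iio j0, φ j < 0
    rw [h1]; linarith
  -- split into positive and nonpositive parts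
  set P : Finset (Fin (n - 1)) := Finset.univ.filter (fun i => 0 < c i) with hP
  set N : Finset (Fin (n - 1)) := Finset.univ.filter (fun i => ¬ 0 < c i) with hN
  set ux := ∑ i ∈ P, φ i * c i * x i with hux
  set uy := ∑ i ∈ P, φ i * c i * y i with huy
  set wx := ∑ i ∈ N, φ i * (-c i) * x i with hwx
  set wy := ∑ i ∈ N, φ i * (-c i) * y i with hwy
  have hsplitx : ∑ i, φ i * c i * x i = ux - wx := by
    rw [hux, hwx, ← Finset.sum_filter_add_sum_filter_not Finset.univ (fun i => 0 < c i)
      (fun i => φ i * c i * x i)]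
    have h3 : ∑ i ∈ N, φ i * (-c i) * x i = -∑ i ∈ N, φ i * c i * x i := by
      rw [← Finset.sum_neg_distrib]; exact Finset.sum_congr rfl fun i _ => by ring
    rw [h3]; ring
  have hsplity : ∑ i, φ i * c i * y i = uy - wy := by
    rw [huy, hwy, ← Finset.sum_filter_add_sum_filter_not Finset.univ (fun i => 0 < c i)
      (fun i => φ i * c i * y i)]
    have h3 : ∑ i ∈ N, φ i * (-c i) * y i = -∑ i ∈ N, φ i * c i * y i := by
      rw [← Finset.sum_neg_distrib]; exact Finset.sum_congr rfl fun i _ => by ring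
    rw [h3]; ring
  -- nonnegativity of all four
  have hPpos : ∀ i ∈ P, 0 < c i := fun i hi => (Finset.mem_filter.mp hi).2
  have hNneg : ∀ i ∈ N, c i ≤ 0 := fun i hi => le_of_not_gt (Finset.mem_filter.mp hi).2
  have hux0 : 0 ≤ ux := Finset.sum_nonneg fun i hi =>
    mul_nonneg (mul_nonneg (hφ i).le (hPpos i hi).le) (hx i)
  have huy0 : 0 ≤ uy := Finset.sum_nonneg fun i hi =>
    mul_nonneg (mul_nonneg (hφ i).le (hPpos i hi).le) (hy i)
  have hwx0 : 0 ≤ wx := Finset.sum_nonneg fun i hi =>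
    mul_nonneg (mul_nonneg (hφ i).le (neg_nonneg.mpr (hNneg i hi))) (hx i)
  have hwy0 : 0 ≤ wy := Finset.sum_nonneg fun i hi =>
    mul_nonneg (mul_nonneg (hφ i).le (neg_nonneg.mpr (hNneg i hi))) (hy i)
  have h1 : ux ≤ wx := by rw [hsplitx] at hXc; linarith
  have h2 : wy ≤ uy := by rw [hsplity] at hYc; linarith
  -- cross product bound from the inequalities
  have hcross_le : ux * wy - uy * wx ≤ 0 := by nlinarith
  -- cross product as double sum
  have hcross_eq : ux * wy - uy * wx
      = ∑ i ∈ P, ∑ j ∈ N, (φ i * c i) * (φ j * (-c j)) * (x i * y j - x j * y i) := by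
    rw [hux, hwy, huy, hwx, Finset.sum_mul_sum, Finset.sum_mul_sum,
      ← Finset.sum_sub_distrib]
    congr 1; ext i
    rw [← Finset.sum_sub_distrib]
    congr 1; ext j; ring
  -- each term nonneg, and the (i0, j0) term positive
  have hterm_nonneg : ∀ i ∈ P, ∀ j ∈ N,
      0 ≤ (φ i * c i) * (φ j * (-c j)) * (x i * y j - x j * y i) := by
    intro i hi j hj
    rcases eq_or_lt_of_le (hNneg j hj) with hj0' | hj0'
    · rw [hj0']; simp
    · have hij : i < j := by
        by_contra hle
        push_neg at hle
        exact absurd (hanti j i hle) (by nlinarith [hPpos i hi])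
      exact le_of_lt (mul_pos (mul_pos (mul_pos (hφ i) (hPpos i hi))
        (mul_pos (hφ j) (by linarith : (0:ℝ) < -c j))) (hangle i j hij))
  have hi0P : i0 ∈ P := Finset.mem_filter.mpr ⟨Finset.mem_univ _, hci0⟩
  have hj0N : j0 ∈ N := Finset.mem_filter.mpr ⟨Finset.mem_univ _, not_lt.mpr hcj0.le⟩
  have hterm_pos : 0 < (φ i0 * c i0) * (φ j0 * (-c j0)) * (x i0 * y j0 - x j0 * y i0) :=
    mul_pos (mul_pos (mul_pos (hφ i0) hci0)
      (mul_pos (hφ j0) (by linarith : (0:ℝ) < -c j0))) (hangle i0 j0 hi0j0)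
  have hcross_pos : 0 < ux * wy - uy * wx := by
    rw [hcross_eq]
    calc (0:ℝ) < (φ i0 * c i0) * (φ j0 * (-c j0)) * (x i0 * y j0 - x j0 * y i0) := hterm_pos
      _ ≤ ∑ j ∈ N, (φ i0 * c i0) * (φ j * (-c j)) * (x i0 * y j - x j * y i0) :=
          Finset.single_le_sum (fun j hj => hterm_nonneg i0 hi0P j hj) hj0N
      _ ≤ ∑ i ∈ P, ∑ j ∈ N, (φ i * c i) * (φ j * (-c j)) * (x i * y j - x j * y i) :=
          Finset.single_le_sum (f := fun i => ∑ j ∈ N,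
            (φ i * c i) * (φ j * (-c j)) * (x i * y j - x j * y i))
            (fun i hi => Finset.sum_nonneg (fun j hj => hterm_nonneg i hi j hj)) hi0P
  linarith
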